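/- Let R > 0 and let u : (0,R] → ℝ be continuously differentiable with ∫₀^R r u'(r)² dr < ∞ and ∫₀^R u(r)²/r dr < ∞. Then u(r) tends to 0 as r → 0⁺. -/

import Mathlib

open MeasureTheory Set Filter

noncomputable section

/-- The Bessel function `J₀`. -/
def besselJ0 (x : ℝ) : ℝ :=
  ∑' m : ℕ, (-1 : ℝ) ^ m * (x / 2) ^ (2 * m) / ((Nat.factorial m : ℝ)) ^ 2

/-- The smallest positive zero of `J₀` (≈ 2.404826). -/
def besselR0 : ℝ := sInf {x : ℝ | 0 < x ∧ besselJ0 x = 0}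

/-- `u` is a classical solution of the `n`-vortex equation with parameters `(α, n, κ, R)`. -/
def IsVortexSol (α : ℝ) (n : ℤ) (κ R : ℝ) (u : ℝ → ℝ) : Prop :=
  ContinuousOn u (Icc 0 R) ∧
  (∀ r ∈ Ioo (0 : ℝ) R, DifferentiableAt ℝ u r ∧ DifferentiableAt ℝ (deriv u) r) ∧
  u 0 = 0 ∧ u R = 0 ∧
  ∀ r ∈ Ioo (0 : ℝ) R,
    deriv (fun s => s * deriv u s) r - ((n : ℝ) ^ 2 / r) * u r
      + 2 * r * (u r) ^ 3 / (1 + α * (u r) ^ 2) - 2 * κ * r * u r = 0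

/-- `u` has finite energy. -/
def FiniteEnergy (α R : ℝ) (u : ℝ → ℝ) : Prop :=
  IntegrableOn
    (fun r => r * (deriv u r) ^ 2 + (u r) ^ 2 / r + r * Real.log (1 + α * (u r) ^ 2))
    (Ioo 0 R)

/-- The energy flux `Q(u) = 2π ∫₀^R r u(r)² dr`. -/
def fluxQ (R : ℝ) (u : ℝ → ℝ) : ℝ := 2 * Real.pi * ∫ r in Ioo (0 : ℝ) R, r * (u r) ^ 2

/-- The tent function with parameters `a` and `b`. -/
def tent (a b : ℝ) : ℝ → ℝ := fun r => if r ≤ a then (b / a) * r else (b / a) * (2 * a - r)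

/-- The action functional `I_κ`. -/
def actI (α : ℝ) (n : ℤ) (κ R : ℝ) (u : ℝ → ℝ) : ℝ :=
  (1 / 2) * ∫ r in Ioo (0 : ℝ) R,
    (r * (deriv u r) ^ 2 + ((n : ℝ) ^ 2 / r) * (u r) ^ 2
      - 2 * (α⁻¹ - κ) * r * (u r) ^ 2 + 2 * (α ^ 2)⁻¹ * r * Real.log (1 + α * (u r) ^ 2))

/-- The action functional `𝓘`. -/
def actI0 (α : ℝ) (n : ℤ) (R : ℝ) (u : ℝ → ℝ) : ℝ :=
  (1 / 2) * ∫ r in Ioo (0 : ℝ) R,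
    (r * (deriv u r) ^ 2 + ((n : ℝ) ^ 2 / r) * (u r) ^ 2
      - 2 * α⁻¹ * r * (u r) ^ 2 + 2 * (α ^ 2)⁻¹ * r * Real.log (1 + α * (u r) ^ 2))

/-- The functional `γ_κ`. -/
def gammaK (α : ℝ) (n : ℤ) (κ R : ℝ) (u : ℝ → ℝ) : ℝ :=
  (1 / 2) * ∫ r in Ioo (0 : ℝ) R,
    (r * (deriv u r) ^ 2 + ((n : ℝ) ^ 2 / r) * (u r) ^ 2
      - 2 * (α⁻¹ - κ) * r * (u r) ^ 2 + 2 * α⁻¹ * r * (u r) ^ 2 / (1 + α * (u r) ^ 2))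

/-- Membership in the class `X`. -/
def MemX (R : ℝ) (u : ℝ → ℝ) : Prop :=
  ContinuousOn u (Icc 0 R) ∧ ContDiffOn ℝ 1 u (Ioo 0 R) ∧ u 0 = 0 ∧ u R = 0 ∧
    IntegrableOn (fun r => r * (deriv u r) ^ 2 + (u r) ^ 2 / r) (Ioo 0 R)

/-- Membership in the class `X`, allowing finitely many exceptional points. -/
def MemX' (R : ℝ) (u : ℝ → ℝ) : Prop :=
  ContinuousOn u (Icc 0 R) ∧ (∃ S : Finset ℝ, ContDiffOn ℝ 1 u (Ioo 0 R \ ↑S)) ∧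
    u 0 = 0 ∧ u R = 0 ∧
    IntegrableOn (fun r => r * (deriv u r) ^ 2 + (u r) ^ 2 / r) (Ioo 0 R)

/-- The admissible class `𝒜`. -/
def Admissible (α R : ℝ) (v : ℝ → ℝ) : Prop :=
  (∃ K : NNReal, LipschitzOnWith K v (Icc 0 R)) ∧ v 0 = 0 ∧ v R = 0 ∧ FiniteEnergy α R v

end

/-- `u(r) → 0` as `r → 0⁺`. -/
theorem stmt10 (R : ℝ) (hR : 0 < R) (u : ℝ → ℝ)
    (hdiff : ∀ r ∈ Ioc (0 : ℝ) R, DifferentiableAt ℝ u r)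
    (hcont : ContinuousOn (deriv u) (Ioc 0 R))
    (h1 : IntegrableOn (fun r => r * (deriv u r) ^ 2) (Ioo 0 R))
    (h2 : IntegrableOn (fun r => (u r) ^ 2 / r) (Ioo 0 R)) :
    Filter.Tendsto u (nhdsWithin 0 (Ioi 0)) (nhds 0) := by
  classical
  have hucont : ContinuousOn u (Ioc 0 R) := fun r hr =>
    (hdiff r hr).continuousAt.continuousWithinAt
  set l := nhdsWithin (0:ℝ) (Ioi 0) with hl
  set g : ℝ → ℝ := fun r => r * (deriv u r) ^ 2 + (u r) ^ 2 / r with hg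
  have hgint : IntegrableOn g (Ioo 0 R) := h1.add h2
  have hgnn : ∀ r : ℝ, 0 < r → 0 ≤ g r := by
    intro r hr
    simp only [hg]
    positivity
  have hevR : ∀ᶠ t in l, t ∈ Ioo (0:ℝ) R := by
    have : Ioo (0:ℝ) R ∈ l := Ioo_mem_nhdsGT_of_mem (left_mem_Ico.2 hR)
    exact this
  -- Step A: the tail integral tends to 0
  have hG : Tendsto (fun t => ∫ r in Ioo (0:ℝ) t, g r) l (nhds 0) := by
    have hDCT : Tendsto (fun t => ∫ r in Ioo (0:ℝ) R, (Ioo (0:ℝ) t).indicator g r)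
        l (nhds (∫ _ in Ioo (0:ℝ) R, (0:ℝ))) := by
      apply MeasureTheory.tendsto_integral_filter_of_dominated_convergence (fun r => ‖g r‖)
      · exact Filter.Eventually.of_forall fun t =>
          hgint.aestronglyMeasurable.indicator measurableSet_Ioo
      · exact Filter.Eventually.of_forall fun t =>
          Filter.Eventually.of_forall fun r => norm_indicator_le_norm_self _ _
      · exact hgint.norm
      · refine (ae_restrict_iff' measurableSet_Ioo).2 (Filter.Eventually.of_forall fun r hr => ?_)
        have hev : ∀ᶠ t in l, (Ioo (0:ℝ) t).indicator g r = 0 := by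
          filter_upwards [Ioo_mem_nhdsGT_of_mem (left_mem_Ico.2 hr.1)] with t ht
          exact indicator_of_notMem (fun hmem => absurd hmem.2 (not_lt.2 ht.2.le)) g
        exact Tendsto.congr' (hev.mono fun t h => h.symm) tendsto_const_nhds
    rw [MeasureTheory.integral_zero] at hDCT
    refine Filter.Tendsto.congr' ?_ hDCT
    filter_upwards [hevR] with t ht
    rw [MeasureTheory.integral_indicator measurableSet_Ioo,
      Measure.restrict_restrict measurableSet_Ioo,
      inter_eq_self_of_subset_left (Ioo_subset_Ioo le_rfl ht.2.le)]
  -- pointwise AM-GM bound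
  have hamgm : ∀ x : ℝ, 0 < x → |2 * u x * deriv u x| ≤ g x := by
    intro x hx
    have h2' : |2 * u x * deriv u x| * x ≤ (u x) ^ 2 + x ^ 2 * (deriv u x) ^ 2 := by
      rcases abs_cases (2 * u x * deriv u x) with ⟨h, _⟩ | ⟨h, _⟩ <;> rw [h] <;>
        nlinarith [sq_nonneg (u x - x * deriv u x), sq_nonneg (u x + x * deriv u x), hx]
    simp only [hg]
    rw [← sub_nonneg]
    have heq : x * (deriv u x) ^ 2 + u x ^ 2 / x - |2 * u x * deriv u x|
        = ((u x) ^ 2 + x ^ 2 * (deriv u x) ^ 2 - |2 * u x * deriv u x| * x) / x := by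
      field_simp; ring
    rw [heq]
    exact div_nonneg (by linarith) hx.le
  -- Step B: FTC bound
  have hbound : ∀ s t : ℝ, s ∈ Ioo (0:ℝ) R → t ∈ Ioo (0:ℝ) R → s ≤ t →
      |u t ^ 2 - u s ^ 2| ≤ ∫ r in Ioo (0:ℝ) t, g r := by
    intro s t hs ht hst
    have hsub : uIcc s t ⊆ Ioc 0 R := by
      rw [uIcc_of_le hst]
      exact fun x hx => ⟨lt_of_lt_of_le hs.1 hx.1, hx.2.trans ht.2.le⟩
    have hcontI : ContinuousOn (fun r => 2 * u r * deriv u r) (uIcc s t) :=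
      (continuousOn_const.mul (hucont.mono hsub)).mul (hcont.mono hsub)
    have hftc : u t ^ 2 - u s ^ 2 = ∫ r in s..t, 2 * u r * deriv u r := by
      refine (intervalIntegral.integral_eq_sub_of_hasDerivAt
        (f := fun r => u r ^ 2) (f' := fun r => 2 * u r * deriv u r)
        (fun x hx => ?_) hcontI.intervalIntegrable).symm
      have := ((hdiff x (hsub hx)).hasDerivAt).pow 2
      norm_num at this
      exact this
    have hgiO : IntegrableOn g (Ioo s t) :=
      hgint.mono_set (Ioo_subset_Ioo hs.1.le ht.2.le)
    have hfiO : IntegrableOn (fun r => 2 * u r * deriv u r) (Ioo s t) := by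
      have : IntervalIntegrable (fun r => 2 * u r * deriv u r) volume s t :=
        hcontI.intervalIntegrable
      rw [intervalIntegrable_iff_integrableOn_Ioo_of_le hst] at this
      exact this
    have habs : |∫ r in s..t, 2 * u r * deriv u r| ≤ ∫ r in Ioo s t, g r := by
      have hstep1 : |∫ r in s..t, 2 * u r * deriv u r|
          ≤ ∫ r in s..t, |2 * u r * deriv u r| :=
        intervalIntegral.abs_integral_le_integral_abs hst
      have hstep2 : (∫ r in s..t, |2 * u r * deriv u r|) = ∫ r in Ioo s t, |2 * u r * deriv u r| := by
        rw [intervalIntegral.integral_of_le hst, MeasureTheory.integral_Ioc_eq_integral_Ioo]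
      refine hstep1.trans ?_
      rw [hstep2]
      refine MeasureTheory.setIntegral_mono_on hfiO.abs hgiO measurableSet_Ioo
        fun x hx => hamgm x (hs.1.trans hx.1)
    have hmono : ∫ r in Ioo s t, g r ≤ ∫ r in Ioo (0:ℝ) t, g r := by
      refine MeasureTheory.setIntegral_mono_set
        (hgint.mono_set (Ioo_subset_Ioo le_rfl ht.2.le))
        ((ae_restrict_iff' measurableSet_Ioo).2
          (Filter.Eventually.of_forall fun r hr => hgnn r hr.1))
        (HasSubset.Subset.eventuallyLE (Ioo_subset_Ioo_left hs.1.le))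
    rw [hftc]
    exact habs.trans hmono
  -- Step C: Cauchy, hence a limit L exists
  have hC : Cauchy (Filter.map (fun r => u r ^ 2) l) := by
    rw [cauchy_map_iff]
    refine ⟨by rw [hl]; infer_instance, ?_⟩
    rw [tendsto_uniformity_iff_dist_tendsto_zero]
    have hmax0 : Tendsto (fun p : ℝ × ℝ => max p.1 p.2) (l ×ˢ l) (nhds 0) := by
      have hf' : Tendsto (Prod.fst : ℝ × ℝ → ℝ) (l ×ˢ l) (nhds 0) :=
        tendsto_fst.mono_right nhdsWithin_le_nhds
      have hs' : Tendsto (Prod.snd : ℝ × ℝ → ℝ) (l ×ˢ l) (nhds 0) :=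
        tendsto_snd.mono_right nhdsWithin_le_nhds
      simpa using hf'.max hs'
    have hmaxmem : ∀ᶠ p : ℝ × ℝ in l ×ˢ l, max p.1 p.2 ∈ Ioi (0:ℝ) := by
      filter_upwards [Filter.prod_mem_prod (self_mem_nhdsWithin) (self_mem_nhdsWithin)]
        with p hp
      exact mem_Ioi.2 (lt_max_of_lt_left (mem_Ioi.1 hp.1))
    have hmaxl : Tendsto (fun p : ℝ × ℝ => max p.1 p.2) (l ×ˢ l) l :=
      tendsto_nhdsWithin_iff.2 ⟨hmax0, hmaxmem⟩
    refine squeeze_zero' (Filter.Eventually.of_forall fun _ => dist_nonneg) ?_ (hG.comp hmaxl)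
    filter_upwards [Filter.prod_mem_prod hevR hevR] with p hp
    rcases le_total p.1 p.2 with hle | hle
    · rw [Real.dist_eq, abs_sub_comm]
      have := hbound p.1 p.2 hp.1 hp.2 hle
      simpa [Function.comp, max_eq_right hle] using this
    · rw [Real.dist_eq]
      have := hbound p.2 p.1 hp.2 hp.1 hle
      simpa [Function.comp, max_eq_left hle] using this
  obtain ⟨L, hL⟩ := CompleteSpace.complete hC
  have hL' : Tendsto (fun r => u r ^ 2) l (nhds L) := hL
  have hneL : l.NeBot := by rw [hl]; infer_instance
  have hge : 0 ≤ L := ge_of_tendsto' hL' fun r => sq_nonneg _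
  -- Step D: L = 0
  have hL0 : L = 0 := by
    by_contra hne
    have hLpos : 0 < L := lt_of_le_of_ne hge (Ne.symm hne)
    have hev : ∀ᶠ r in l, L / 2 ≤ u r ^ 2 :=
      hL'.eventually (eventually_ge_nhds (by linarith))
    obtain ⟨ε, hε, hsubs⟩ := (nhdsGT_basis_of_exists_gt ⟨1, one_pos⟩).eventually_iff.1
      (hev.and hevR)
    set δ := min ε R with hδ
    have hδpos : 0 < δ := lt_min hε hR
    have hδR : δ ≤ R := min_le_right _ _
    have hint : IntegrableOn (fun r => L / 2 * r⁻¹) (Ioo 0 δ) := by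
      refine Integrable.mono' (h2.mono_set (Ioo_subset_Ioo le_rfl hδR))
        ((measurable_const.mul measurable_inv).aestronglyMeasurable) ?_
      refine (ae_restrict_iff' measurableSet_Ioo).2 (Filter.Eventually.of_forall fun r hr => ?_)
      have hr0 : 0 < r := hr.1
      have hrmem : r ∈ Ioo 0 ε := ⟨hr0, hr.2.trans_le (min_le_left _ _)⟩
      have hle : L / 2 ≤ u r ^ 2 := (hsubs hrmem).1
      rw [Real.norm_eq_abs, abs_of_nonneg (by positivity)]
      rw [div_eq_mul_inv (u r ^ 2) r]
      exact mul_le_mul_of_nonneg_right hle (inv_nonneg.2 hr0.le)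
    have hint2 : IntegrableOn (fun r : ℝ => r⁻¹) (Ioo 0 δ) := by
      have := hint.const_mul (2 / L)
      have heq : (fun r : ℝ => 2 / L * (L / 2 * r⁻¹)) = fun r : ℝ => r⁻¹ := by
        funext r
        rcases eq_or_ne r 0 with h | h
        · simp [h]
        · field_simp
      rwa [heq] at this
    have hint3 : IntegrableOn (fun r : ℝ => r ^ (-1:ℝ)) (Ioo 0 δ) := by
      have heq : (fun r : ℝ => r ^ (-1:ℝ)) = fun r : ℝ => r⁻¹ := by
        funext r; exact Real.rpow_neg_one r
      rwa [heq]
    have := (intervalIntegral.integrableOn_Ioo_rpow_iff hδpos).1 hint3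
    linarith
  rw [hL0] at hL'
  have habs : Tendsto (fun r => |u r|) l (nhds 0) := by
    have := (Real.continuous_sqrt.tendsto 0).comp hL'
    simpa [Function.comp_def, Real.sqrt_sq_eq_abs] using this
  exact (tendsto_zero_iff_abs_tendsto_zero u).2 habs
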